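/- Let α : ℕ → Ordinal be a bounded sequence (each αᵢ < ε₀ and αᵢ = 0 for all but finitely many i). Define β by: if n is the largest index with αₙ ≠ 0 (or all αᵢ = 0), set βᵢ = 0 for i > n, βₙ = αₙ, and for i < n, βᵢ = αᵢ if ℓ(αᵢ) ≥ β_{i+1}, else βᵢ = αᵢ + ω^{β_{i+1}}. Then β ∈ I, β pointwise dominates α (βᵢ ≥ αᵢ for all i), and β is the pointwise-least such element of I: for any γ ∈ I with γᵢ ≥ αᵢ for all i, γᵢ ≥ βᵢ for all i. -/

import Mathlib

open Ordinal

/-- `ell β` is the exponent of the last (smallest) term of the Cantor normal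
form of `β` (base ω), with `ell 0 = 0`. -/
noncomputable def ell (b : Ordinal) : Ordinal :=
  ((Ordinal.CNF omega0 b).map Prod.fst).getLastD 0

/-- `ε₀`, the least ordinal `α` with `ω ^ α = α`. -/
noncomputable def eps0 : Ordinal := Ordinal.nfp (fun a => omega0 ^ a) 0

lemma ell_zero : ell 0 = 0 := by rw [ell, Ordinal.CNF.zero_right]; rfl

lemma getLastD_indep {l : List Ordinal} (hl : l ≠ []) (x y : Ordinal) :
    l.getLastD x = l.getLastD y := by
  cases l with
  | nil => exact absurd rfl hl
  | cons a t => rw [List.getLastD_cons, List.getLastD_cons]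

lemma ell_of_mod_eq_zero {c : Ordinal} (hc : c ≠ 0)
    (h : c % omega0 ^ Ordinal.log omega0 c = 0) : ell c = Ordinal.log omega0 c := by
  rw [ell, Ordinal.CNF.ne_zero hc, h, Ordinal.CNF.zero_right]
  rfl

lemma ell_of_mod_ne_zero {c : Ordinal} (hc : c ≠ 0)
    (h : c % omega0 ^ Ordinal.log omega0 c ≠ 0) :
    ell c = ell (c % omega0 ^ Ordinal.log omega0 c) := by
  rw [ell, Ordinal.CNF.ne_zero hc, List.map_cons, List.getLastD_cons, ell]
  apply getLastD_indep
  rw [Ne, List.map_eq_nil_iff]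
  intro he
  rw [Ordinal.CNF.ne_zero h] at he
  exact List.cons_ne_nil _ _ he

lemma ell_le_log : ∀ c : Ordinal, ell c ≤ Ordinal.log omega0 c := by
  intro c
  induction c using Ordinal.induction with
  | h c IH =>
    rcases eq_or_ne c 0 with rfl | hc
    · simp [ell_zero]
    rcases eq_or_ne (c % omega0 ^ Ordinal.log omega0 c) 0 with h | h
    · rw [ell_of_mod_eq_zero hc h]
    · rw [ell_of_mod_ne_zero hc h]
      have hlt : c % omega0 ^ Ordinal.log omega0 c < c := by
        calc c % omega0 ^ Ordinal.log omega0 c < omega0 ^ Ordinal.log omega0 c :=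
              Ordinal.mod_lt _ (Ordinal.opow_ne_zero _ omega0_ne_zero)
          _ ≤ c := Ordinal.opow_log_le_self _ hc
      exact (IH _ hlt).trans ((Ordinal.log_mono_right _ hlt.le).trans le_rfl)

lemma mul_add_mod' {b s : Ordinal} (q : Ordinal) (hs : s < b) :
    (b * q + s) % b = s := by
  have hb : b ≠ 0 := fun h => absurd (h ▸ hs) (by simp)
  rw [Ordinal.mod_def, Ordinal.mul_add_div q hb, Ordinal.div_eq_zero_of_lt hs,
    add_zero, Ordinal.add_sub_cancel]

lemma ell_opow (γ : Ordinal) : ell (omega0 ^ γ) = γ := by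
  have h0 : omega0 ^ γ ≠ 0 := Ordinal.opow_ne_zero _ omega0_ne_zero
  have hlog : Ordinal.log omega0 (omega0 ^ γ) = γ := Ordinal.log_opow one_lt_omega0 γ
  rw [ell_of_mod_eq_zero h0 (by rw [hlog, Ordinal.mod_self]), hlog]

lemma ell_add_opow : ∀ δ γ : Ordinal, ell (δ + omega0 ^ γ) = γ := by
  intro δ
  induction δ using Ordinal.induction with
  | h δ IH =>
    intro γ
    rcases lt_or_ge δ (omega0 ^ γ) with hlt | hge
    · rw [Ordinal.add_absorp hlt le_rfl, ell_opow]
    · have hωγ : (0:Ordinal) < omega0 ^ γ := Ordinal.opow_pos _ omega0_pos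
      have hδ0 : δ ≠ 0 := fun h => absurd (hωγ.trans_le hge) (by simp [h])
      set e := Ordinal.log omega0 δ with he
      have hγe : γ ≤ e := (Ordinal.opow_le_iff_le_log one_lt_omega0 hδ0).1 hge
      set q := δ / omega0 ^ e with hq
      set r := δ % omega0 ^ e with hr
      have hωe : (0:Ordinal) < omega0 ^ e := Ordinal.opow_pos _ omega0_pos
      have hdm : omega0 ^ e * q + r = δ := Ordinal.div_add_mod δ _
      have hrlt : r < omega0 ^ e := Ordinal.mod_lt _ hωe.ne'
      have hqω : q < omega0 := by
        rw [hq, Ordinal.div_lt hωe.ne', ← Ordinal.opow_succ]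
        exact Ordinal.lt_opow_succ_log_self one_lt_omega0 δ
      have hq1ω : q + 1 < omega0 := by
        simpa using isSuccLimit_omega0.succ_lt hqω
      have hble : omega0 ^ e ≤ δ + omega0 ^ γ :=
        (Ordinal.opow_log_le_self _ hδ0).trans le_self_add
      have hb0 : δ + omega0 ^ γ ≠ 0 := (hωe.trans_le hble).ne'
      rcases eq_or_lt_of_le hγe with heq | hγlt
      · -- γ = e
        rw [heq]
        rw [heq] at hge hωγ hble
        have hb : δ + omega0 ^ e = omega0 ^ e * (q + 1) := by
          rw [← hdm, add_assoc, Ordinal.add_absorp hrlt le_rfl, mul_add, mul_one]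
        have hb0' : δ + omega0 ^ e ≠ 0 := (hωe.trans_le hble).ne'
        have hlog : Ordinal.log omega0 (δ + omega0 ^ e) = e := by
          rw [Ordinal.log_eq_iff one_lt_omega0 hb0' e]
          refine ⟨hble, ?_⟩
          rw [hb, ← Order.succ_eq_add_one e, Ordinal.opow_succ]
          exact (mul_lt_mul_iff_right₀ hωe).2 hq1ω
        rw [ell_of_mod_eq_zero hb0' ?_, hlog]
        rw [hlog, hb]
        exact Ordinal.mod_eq_zero_of_dvd ⟨q + 1, rfl⟩
      · -- γ < e
        have hslt : r + omega0 ^ γ < omega0 ^ e :=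
          Ordinal.principal_add_omega0_opow e hrlt
            ((Ordinal.opow_lt_opow_iff_right one_lt_omega0).2 hγlt)
        have hs0 : r + omega0 ^ γ ≠ 0 := (hωγ.trans_le le_add_self).ne'
        have hb : δ + omega0 ^ γ = omega0 ^ e * q + (r + omega0 ^ γ) := by
          rw [← hdm, add_assoc]
        have hlog : Ordinal.log omega0 (δ + omega0 ^ γ) = e := by
          rw [Ordinal.log_eq_iff one_lt_omega0 hb0 e]
          refine ⟨hble, ?_⟩
          rw [hb, ← Order.succ_eq_add_one e, Ordinal.opow_succ]
          calc omega0 ^ e * q + (r + omega0 ^ γ)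
              < omega0 ^ e * q + omega0 ^ e := add_lt_add_right hslt _
            _ = omega0 ^ e * (q + 1) := by rw [mul_add, mul_one]
            _ ≤ omega0 ^ e * omega0 := (mul_le_mul_iff_right₀ hωe).2 hq1ω.le
        have hmod : (δ + omega0 ^ γ) % omega0 ^ e = r + omega0 ^ γ := by
          rw [hb, mul_add_mod' q hslt]
        rw [ell_of_mod_ne_zero hb0 (by rw [hlog, hmod]; exact hs0), hlog, hmod]
        exact IH r (hrlt.trans_le (Ordinal.opow_log_le_self _ hδ0)) γ

lemma opow_dvd_of_le_ell : ∀ c : Ordinal, ∀ γ ≤ ell c, omega0 ^ γ ∣ c := by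
  intro c
  induction c using Ordinal.induction with
  | h c IH =>
    intro γ hγ
    rcases eq_or_ne c 0 with rfl | hc
    · exact dvd_zero _
    have hωe : (0:Ordinal) < omega0 ^ Ordinal.log omega0 c := Ordinal.opow_pos _ omega0_pos
    have hopow_dvd : ∀ x ≤ Ordinal.log omega0 c, omega0 ^ x ∣ omega0 ^ Ordinal.log omega0 c := by
      intro x hx
      refine ⟨omega0 ^ (Ordinal.log omega0 c - x), ?_⟩
      rw [← Ordinal.opow_add, Ordinal.add_sub_cancel_of_le hx]
    rcases eq_or_ne (c % omega0 ^ Ordinal.log omega0 c) 0 with h | h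
    · rw [ell_of_mod_eq_zero hc h] at hγ
      refine dvd_trans (hopow_dvd γ hγ) ⟨c / omega0 ^ Ordinal.log omega0 c, ?_⟩
      conv_lhs => rw [← Ordinal.div_add_mod c (omega0 ^ Ordinal.log omega0 c), h, add_zero]
    · rw [ell_of_mod_ne_zero hc h] at hγ
      have hmlt : c % omega0 ^ Ordinal.log omega0 c < c :=
        (Ordinal.mod_lt _ hωe.ne').trans_le (Ordinal.opow_log_le_self _ hc)
      have h1 : omega0 ^ γ ∣ c % omega0 ^ Ordinal.log omega0 c := IH _ hmlt γ hγ
      have hγle : γ ≤ Ordinal.log omega0 c :=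
        hγ.trans ((ell_le_log _).trans (Ordinal.log_mono_right _ hmlt.le))
      obtain ⟨m1, hm1⟩ := hopow_dvd γ hγle
      obtain ⟨m2, hm2⟩ := h1
      refine ⟨m1 * (c / omega0 ^ Ordinal.log omega0 c) + m2, ?_⟩
      rw [mul_add, ← mul_assoc, ← hm1, ← hm2, Ordinal.div_add_mod]

lemma add_opow_le {a c γ : Ordinal} (hac : a < c) (hdvd : omega0 ^ γ ∣ c) :
    a + omega0 ^ γ ≤ c := by
  obtain ⟨m, rfl⟩ := hdvd
  have hω : (0:Ordinal) < omega0 ^ γ := Ordinal.opow_pos _ omega0_pos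
  have hdm : omega0 ^ γ * (a / omega0 ^ γ) + a % omega0 ^ γ = a := Ordinal.div_add_mod a _
  have hqm : a / omega0 ^ γ < m := by
    rw [Ordinal.div_lt hω.ne']
    exact hac
  calc a + omega0 ^ γ = omega0 ^ γ * (a / omega0 ^ γ) + (a % omega0 ^ γ + omega0 ^ γ) := by
        rw [← add_assoc, hdm]
    _ = omega0 ^ γ * (a / omega0 ^ γ) + omega0 ^ γ := by
        rw [Ordinal.add_absorp (Ordinal.mod_lt _ hω.ne') le_rfl]
    _ = omega0 ^ γ * (a / omega0 ^ γ + 1) := by rw [mul_add, mul_one]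
    _ ≤ omega0 ^ γ * m := (mul_le_mul_iff_right₀ hω).2 (Order.add_one_le_iff.2 hqm)

lemma eps0_fix : omega0 ^ eps0 = eps0 := by
  rw [eps0]; exact Ordinal.nfp_fp (Ordinal.isNormal_opow one_lt_omega0) 0

noncomputable def igAux (a : ℕ → Ordinal) (n : ℕ) : ℕ → Ordinal
  | 0 => a n
  | k + 1 =>
    if igAux a n k ≤ ell (a (n - (k + 1))) then a (n - (k + 1))
    else a (n - (k + 1)) + omega0 ^ igAux a n k

lemma eps0_pos : 0 < eps0 := by
  rw [← eps0_fix]; exact Ordinal.opow_pos _ omega0_pos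

lemma opow_lt_eps0 {x : Ordinal} (h : x < eps0) : omega0 ^ x < eps0 := by
  conv_rhs => rw [← eps0_fix]
  exact (Ordinal.opow_lt_opow_iff_right one_lt_omega0).2 h

lemma add_lt_eps0 {x y : Ordinal} (hx : x < eps0) (hy : y < eps0) : x + y < eps0 := by
  have := Ordinal.principal_add_omega0_opow eps0
  rw [eps0_fix] at this
  exact this hx hy

/-- Membership in the Ignatiev set `I`: sequences of ordinals below `ε₀` with
`α (i+1) ≤ ℓ (α i)` for all `i`. -/
def IgMem (a : ℕ → Ordinal) : Prop :=
  (∀ i, a i < eps0) ∧ ∀ i, a (i + 1) ≤ ell (a i)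

/-- For a bounded sequence `a` with largest nonzero index `n` (or identically 0),
the sequence `b` defined by downward recursion is the pointwise-least element of
`I` pointwise dominating `a`. -/
theorem stmt_10 (a : ℕ → Ordinal) (n : ℕ)
    (ha : ∀ i, a i < eps0)
    (htail : ∀ i, n < i → a i = 0)
    (hlargest : a n ≠ 0 ∨ ∀ i, a i = 0) :
    ∃ b : ℕ → Ordinal,
      (∀ i, n < i → b i = 0) ∧ b n = a n ∧
      (∀ i, i < n →
        b i = if b (i + 1) ≤ ell (a i) then a i else a i + omega0 ^ b (i + 1)) ∧
      IgMem b ∧ (∀ i, a i ≤ b i) ∧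
      ∀ c : ℕ → Ordinal, IgMem c → (∀ i, a i ≤ c i) → ∀ i, b i ≤ c i := by

  classical
  set b : ℕ → Ordinal := fun i => if n < i then 0 else igAux a n (n - i) with hbdef
  have hbt : ∀ i, n < i → b i = 0 := by
    intro i hi; simp [hbdef, hi]
  have hbn : b n = a n := by simp [hbdef, igAux]
  have hrec : ∀ i, i < n →
      b i = if b (i + 1) ≤ ell (a i) then a i else a i + omega0 ^ b (i + 1) := by
    intro i hi
    have h1 : ¬ n < i := by omega
    have h2 : ¬ n < i + 1 := by omega
    have h3 : n - i = (n - (i + 1)) + 1 := by omega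
    have h4 : n - ((n - (i + 1)) + 1) = i := by omega
    have hb1 : b (i + 1) = igAux a n (n - (i + 1)) := by simp [hbdef, h2]
    have hbi : b i = igAux a n ((n - (i + 1)) + 1) := by rw [hbdef]; simp [h1, h3]
    rw [hbi, hb1, igAux, h4]
  have hdom : ∀ i, a i ≤ b i := by
    intro i
    rcases lt_trichotomy i n with h | rfl | h
    · rw [hrec i h]
      split
      · exact le_rfl
      · exact le_self_add
    · rw [hbn]
    · rw [hbt i h, htail i h]
  have hlt : ∀ k i, n ≤ i + k → b i < eps0 := by
    intro k
    induction k with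
    | zero =>
      intro i hi
      rcases eq_or_lt_of_le (by omega : n ≤ i) with rfl | h
      · rw [hbn]; exact ha _
      · rw [hbt i h]; exact eps0_pos
    | succ k IH =>
      intro i hi
      by_cases h : n ≤ i + k
      · exact IH i h
      · have hin : i < n := by omega
        rw [hrec i hin]
        have hb1 : b (i + 1) < eps0 := IH (i + 1) (by omega)
        split
        · exact ha i
        · exact add_lt_eps0 (ha i) (opow_lt_eps0 hb1)
  have hig2 : ∀ i, b (i + 1) ≤ ell (b i) := by
    intro i
    by_cases hin : i < n
    · rw [hrec i hin]
      split
      · assumption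
      · rw [ell_add_opow]
    · rw [hbt (i + 1) (by omega)]
      exact zero_le
  refine ⟨b, hbt, hbn, hrec, ⟨fun i => hlt (n + 1) i (by omega), hig2⟩, hdom, ?_⟩
  intro c hc hac
  have key : ∀ k i, n ≤ i + k → b i ≤ c i := by
    intro k
    induction k with
    | zero =>
      intro i hi
      rcases eq_or_lt_of_le (by omega : n ≤ i) with rfl | h
      · rw [hbn]; exact hac _
      · rw [hbt i h]; exact zero_le
    | succ k IH =>
      intro i hi
      by_cases h : n ≤ i + k
      · exact IH i h
      · have hin : i < n := by omega
        have hb1 : b (i + 1) ≤ c (i + 1) := IH (i + 1) (by omega)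
        rw [hrec i hin]
        split
        · exact hac i
        · rename_i hcase
          have hγ : b (i + 1) ≤ ell (c i) := hb1.trans (hc.2 i)
          have hne : a i ≠ c i := by
            intro heq
            exact hcase (by rw [heq]; exact hγ)
          have hlt' : a i < c i := lt_of_le_of_ne (hac i) hne
          exact add_opow_le hlt' (opow_dvd_of_le_ell (c i) _ hγ)
  intro i
  exact key (n + 1) i (by omega)
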